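/- Let R be a selfadjoint positive-definite ℂ-linear map with R ∘ R = C, set J = s ∘ R⁻¹, and let (θ₁, …, θ_d) be an orthonormal basis of V with J(θᵢ) = θᵢ for each i. Then the matrix M with entries Mᵢⱼ = ⟨θᵢ, R θⱼ⟩ is complex orthogonal: Mᵀ M = 1, i.e. M⁻¹ = Mᵀ. -/

import Mathlib

/-- let `R` be a selfadjoint positive-definite square root of `C`, set
`J = s ∘ R⁻¹` (i.e. `J (R x) = s x`), and let `(θ₁, …, θ_d)` be an orthonormal basis of `V`
fixed by `J`. Then the matrix `M` with `Mᵢⱼ = ⟨θᵢ, R θⱼ⟩` is complex orthogonal: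
`Mᵀ M = 1`, i.e. `M⁻¹ = Mᵀ`. -/
theorem sqrt_modular_matrix_orthogonal
    {V : Type*} [NormedAddCommGroup V] [InnerProductSpace ℂ V] [FiniteDimensional ℂ V]
    (s : V →ₗ⋆[ℂ] V) (hs : ∀ x : V, s (s x) = x)
    (C : V →ₗ[ℂ] V)
    (hC : ∀ x y : V, (inner ℂ (s x) (s y) : ℂ) = inner ℂ y (C x))
    (R : V →ₗ[ℂ] V) (hRsym : R.IsSymmetric)
    (hRpos : ∀ x : V, x ≠ 0 → ∃ r : ℝ, ((inner ℂ x (R x) : ℂ) = (r : ℂ)) ∧ 0 < r)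
    (hRR : ∀ x : V, R (R x) = C x)
    (J : V →ₗ⋆[ℂ] V) (hJ : ∀ x : V, J (R x) = s x)
    {d : ℕ} (θ : OrthonormalBasis (Fin d) ℂ V)
    (hθ : ∀ i : Fin d, J (θ i) = θ i)
    (M : Matrix (Fin d) (Fin d) ℂ)
    (hM : ∀ i j : Fin d, M i j = inner ℂ (θ i) (R (θ j))) :
    M.transpose * M = 1 ∧ M * M.transpose = 1 := by

  -- R is injective, hence surjective
  have hRinj : Function.Injective R := by
    intro x y hxy
    by_contra hne
    have hx : x - y ≠ 0 := sub_ne_zero.mpr hne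
    obtain ⟨r, hr, hrpos⟩ := hRpos (x - y) hx
    have : R (x - y) = 0 := by simp [map_sub, hxy]
    rw [this] at hr
    simp at hr
    exact hrpos.ne' (by exact_mod_cast hr.symm)
  have hRsurj : Function.Surjective R :=
    (LinearMap.injective_iff_surjective).mp hRinj
  -- key fact: R (s (θ i)) = θ i
  have key : ∀ i : Fin d, R (s (θ i)) = θ i := by
    intro i
    obtain ⟨x, hx⟩ := hRsurj (θ i)
    have h1 : s x = θ i := by rw [← hJ x, hx, hθ i]
    have h2 : s (θ i) = x := by rw [← h1, hs]
    rw [h2, hx]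
  -- rewrite M k i
  have hM' : ∀ k i : Fin d, M k i = inner ℂ (s (θ i)) (θ k) := by
    intro k i
    have h1 : M k i = (inner ℂ (R (s (θ k))) (R (θ i)) : ℂ) := by
      rw [hM, key]
    rw [h1, hRsym (s (θ k)) (R (θ i))]
    rw [show R (R (θ i)) = C (θ i) from hRR _]
    rw [← hC (θ i) (s (θ k)), hs]
  have main : M.transpose * M = 1 := by
    ext i j
    rw [Matrix.mul_apply]
    simp only [Matrix.transpose_apply]
    have : ∀ k : Fin d, M k i * M k j
        = (inner ℂ (s (θ i)) (θ k) : ℂ) * inner ℂ (θ k) (R (θ j)) := by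
      intro k
      rw [hM' k i, hM k j]
    rw [Finset.sum_congr rfl fun k _ => this k]
    rw [θ.sum_inner_mul_inner (s (θ i)) (R (θ j))]
    rw [← hRsym (s (θ i)) (θ j), key i]
    rw [orthonormal_iff_ite.mp θ.orthonormal i j]
    simp [Matrix.one_apply]
  exact ⟨main, mul_eq_one_comm.mp main⟩
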